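/- The set of all representable schedules contains at least one optimal schedule: for every TxnSP instance there exists a permutation (linear ordering) of the full job set J such that the schedule created from it by the derivation rule has makespan less than or equal to the makespan of every subschedule formed by J. -/

import Mathlib

/-!  Formalization of TxnSP (transaction scheduling) basic notions.

A TxnSP instance: a finite job type `ι`, lengths `L : ι → ℝ` (positive),
a symmetric irreflexive conflict relation `C`, and `m ≥ 1` identical machines.
A schedule formed by a subset `jobs` assigns each job a machine and a start time. -/

structure Sched (ι : Type*) (m : ℕ) where
  jobs : Finset ι
  machine : ι → Fin m
  start : ι → ℝ

namespace Sched

variable {ι : Type*} {m : ℕ}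

/-- Completion time of a job. -/
noncomputable def ct (s : Sched ι m) (L : ι → ℝ) (a : ι) : ℝ :=
  s.start a + L a

/-- A schedule is feasible if all start times are nonnegative and any two distinct
jobs of the schedule that are on the same machine or conflict have disjoint open
processing intervals. -/
def Feasible (s : Sched ι m) (L : ι → ℝ) (C : ι → ι → Prop) : Prop :=
  (∀ a ∈ s.jobs, 0 ≤ s.start a) ∧
  ∀ a ∈ s.jobs, ∀ b ∈ s.jobs, a ≠ b → (s.machine a = s.machine b ∨ C a b) →
    s.ct L a ≤ s.start b ∨ s.ct L b ≤ s.start a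

/-- Processing time of machine `k`: the maximum completion time among jobs assigned
to it (`0` if none). -/
noncomputable def procTime (s : Sched ι m) (L : ι → ℝ) (k : Fin m) : ℝ :=
  sSup (insert 0 {x : ℝ | ∃ a ∈ s.jobs, s.machine a = k ∧ x = s.ct L a})

/-- Makespan: maximum processing time over the machines. -/
noncomputable def ms (s : Sched ι m) (L : ι → ℝ) : ℝ :=
  sSup (Set.range fun k : Fin m => s.procTime L k)

/-- Minimum time: minimum processing time over the machines. -/
noncomputable def mt (s : Sched ι m) (L : ι → ℝ) : ℝ :=
  sInf (Set.range fun k : Fin m => s.procTime L k)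

/-- A subschedule: a feasible schedule in which no job's start time can be strictly
decreased (keeping its machine assignment and all other jobs fixed) without violating
feasibility. -/
def IsSub [DecidableEq ι] (s : Sched ι m) (L : ι → ℝ) (C : ι → ι → Prop) : Prop :=
  s.Feasible L C ∧
  ∀ a ∈ s.jobs, ∀ t : ℝ, t < s.start a →
    ¬ (Sched.mk s.jobs s.machine (Function.update s.start a t)).Feasible L C

/-- One instruction of a derivation plan: insert the (new) job `a` on machine `k`
at the earliest start time keeping the whole schedule feasible and not earlier than
the completion times of jobs already on machine `k`. -/
def InsertStep [DecidableEq ι] (L : ι → ℝ) (C : ι → ι → Prop)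
    (s : Sched ι m) (a : ι) (k : Fin m) (s' : Sched ι m) : Prop :=
  a ∉ s.jobs ∧
  s'.jobs = insert a s.jobs ∧
  s'.machine = Function.update s.machine a k ∧
  (∀ b ∈ s.jobs, s'.start b = s.start b) ∧
  s'.Feasible L C ∧
  (∀ b ∈ s.jobs, s.machine b = k → s.ct L b ≤ s'.start a) ∧
  ∀ t : ℝ,
    (Sched.mk s'.jobs s'.machine (Function.update s'.start a t)).Feasible L C →
    (∀ b ∈ s.jobs, s.machine b = k → s.ct L b ≤ t) →
    s'.start a ≤ t

/-- Applying a derivation plan (a finite list of (job, machine) instructions)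
to a base subschedule, inserting the listed jobs in order. -/
def ApplyPlan [DecidableEq ι] (L : ι → ℝ) (C : ι → ι → Prop) :
    Sched ι m → List (ι × Fin m) → Sched ι m → Prop
  | s, [], s' => s' = s
  | s, (a, k) :: rest, s' => ∃ s₁, InsertStep L C s a k s₁ ∧ ApplyPlan L C s₁ rest s'

/-- `j` is derived from `i` (equivalently, `i` is a root of `j`) if `j` is obtained
from `i` by applying some derivation plan. -/
def DerivedFrom [DecidableEq ι] (L : ι → ℝ) (C : ι → ι → Prop) (i j : Sched ι m) : Prop :=
  ∃ p : List (ι × Fin m), ApplyPlan L C i p j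

/-- The set of last jobs: jobs with the latest completion time on their machine. -/
def LJ (s : Sched ι m) (L : ι → ℝ) : Set ι :=
  {a | a ∈ s.jobs ∧ ∀ b ∈ s.jobs, s.machine b = s.machine a → s.ct L b ≤ s.ct L a}

/-- Two subschedules formed by the same subset are equivalent if they have the same
last jobs and the same completion time for every job. -/
def Equivalent (i j : Sched ι m) (L : ι → ℝ) : Prop :=
  i.jobs = j.jobs ∧ i.LJ L = j.LJ L ∧ ∀ a ∈ i.jobs, i.ct L a = j.ct L a

/-- A schedule formed by the full job set is optimal if it is a subschedule whose
makespan is ≤ the makespan of every subschedule formed by the full job set. -/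
def Optimal [DecidableEq ι] [Fintype ι] (L : ι → ℝ) (C : ι → ι → Prop)
    (s : Sched ι m) : Prop :=
  s.jobs = Finset.univ ∧ s.IsSub L C ∧
  ∀ t : Sched ι m, t.jobs = Finset.univ → t.IsSub L C → s.ms L ≤ t.ms L

/-- Moving job `a` of `s` to another machine `k`, re-placing it at the earliest
feasible start time on that machine, all other jobs fixed. -/
def Move [DecidableEq ι] (L : ι → ℝ) (C : ι → ι → Prop)
    (s : Sched ι m) (a : ι) (k : Fin m) (s' : Sched ι m) : Prop :=
  a ∈ s.jobs ∧ k ≠ s.machine a ∧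
  s'.jobs = s.jobs ∧
  s'.machine = Function.update s.machine a k ∧
  (∀ b ∈ s.jobs, b ≠ a → s'.start b = s.start b) ∧
  s'.Feasible L C ∧
  ∀ t : ℝ,
    (Sched.mk s'.jobs s'.machine (Function.update s'.start a t)).Feasible L C →
    s'.start a ≤ t

/-- `s` is reducible by a job `a ∈ LJ s` if its makespan can be strictly decreased
by moving `a` to another machine. -/
def ReducibleBy [DecidableEq ι] (L : ι → ℝ) (C : ι → ι → Prop)
    (s : Sched ι m) (a : ι) : Prop :=
  a ∈ s.LJ L ∧ ∃ (k : Fin m) (s' : Sched ι m), Move L C s a k s' ∧ s'.ms L < s.ms L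

/-- `s` is non-reducible if it is reducible by no job. -/
def NonReducible [DecidableEq ι] (L : ι → ℝ) (C : ι → ι → Prop) (s : Sched ι m) : Prop :=
  ∀ a : ι, ¬ s.ReducibleBy L C a

/-- One step of the derivation rule: insert the next job on a machine with the
smallest current processing time (smallest index in case of ties), at the earliest
feasible start time. -/
def RuleStep [DecidableEq ι] (L : ι → ℝ) (C : ι → ι → Prop)
    (s : Sched ι m) (a : ι) (s' : Sched ι m) : Prop :=
  ∃ k : Fin m,
    (∀ k' : Fin m, s.procTime L k ≤ s.procTime L k') ∧
    (∀ k' : Fin m, s.procTime L k' = s.procTime L k → k ≤ k') ∧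
    InsertStep L C s a k s'

/-- Creating a schedule from a sequence of jobs by the derivation rule. -/
def RuleApply [DecidableEq ι] (L : ι → ℝ) (C : ι → ι → Prop) :
    Sched ι m → List ι → Sched ι m → Prop
  | s, [], s' => s' = s
  | s, a :: rest, s' => ∃ s₁, RuleStep L C s a s₁ ∧ RuleApply L C s₁ rest s'

/-- A schedule is representable if it can be created from some finite sequence of
distinct jobs by the derivation rule, starting from the empty subschedule. -/
def Representable [DecidableEq ι] (L : ι → ℝ) (C : ι → ι → Prop) (s : Sched ι m) : Prop :=
  ∃ (e : Sched ι m) (l : List ι), e.jobs = ∅ ∧ RuleApply L C e l s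

end Sched


namespace Sched

set_option linter.unusedSectionVars false
set_option linter.unusedVariables false

variable {ι : Type*} [DecidableEq ι] {m : ℕ}

/-- Feasibility only depends on the data restricted to the job set. -/
lemma Feasible.congr' {s t : Sched ι m} {L : ι → ℝ} {C : ι → ι → Prop}
    (h : s.Feasible L C) (hj : t.jobs = s.jobs)
    (hmac : ∀ b ∈ s.jobs, t.machine b = s.machine b)
    (hst : ∀ b ∈ s.jobs, t.start b = s.start b) : t.Feasible L C := by
  obtain ⟨h0, h2⟩ := h
  constructor
  · intro a ha; rw [hj] at ha; rw [hst a ha]; exact h0 a ha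
  · intro a ha b hb hab hcond
    rw [hj] at ha hb
    rw [hmac a ha, hmac b hb] at hcond
    have := h2 a ha b hb hab hcond
    simpa [Sched.ct, hst a ha, hst b hb] using this

lemma procTime_eq (s : Sched ι m) (L : ι → ℝ) (k : Fin m) :
    s.procTime L k
      = (insert (0:ℝ) ((s.jobs.filter (fun b => s.machine b = k)).image (s.ct L))).max'
          (Finset.insert_nonempty _ _) := by
  have hset : (insert (0:ℝ) {x : ℝ | ∃ a ∈ s.jobs, s.machine a = k ∧ x = s.ct L a}) =
      ↑(insert (0:ℝ) ((s.jobs.filter (fun b => s.machine b = k)).image (s.ct L))) := by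
    ext x
    simp only [Set.mem_insert_iff, Set.mem_setOf_eq, Finset.coe_insert, Finset.coe_image,
      Finset.coe_filter, Set.mem_image, Set.mem_setOf_eq]
    constructor
    · rintro (rfl | ⟨a, ha, hk, rfl⟩)
      · exact Or.inl rfl
      · exact Or.inr ⟨a, ⟨ha, hk⟩, rfl⟩
    · rintro (rfl | ⟨a, ⟨ha, hk⟩, rfl⟩)
      · exact Or.inl rfl
      · exact Or.inr ⟨a, ha, hk, rfl⟩
  rw [Sched.procTime, hset, Finset.Nonempty.csSup_eq_max']

lemma le_procTime {s : Sched ι m} {L : ι → ℝ} {k : Fin m} {b : ι}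
    (hb : b ∈ s.jobs) (hk : s.machine b = k) : s.ct L b ≤ s.procTime L k := by
  rw [procTime_eq]
  exact Finset.le_max' _ _ (by
    refine Finset.mem_insert_of_mem (Finset.mem_image.2 ⟨b, ?_, rfl⟩)
    exact Finset.mem_filter.2 ⟨hb, hk⟩)

lemma procTime_nonneg (s : Sched ι m) (L : ι → ℝ) (k : Fin m) : 0 ≤ s.procTime L k := by
  rw [procTime_eq]
  exact Finset.le_max' _ _ (Finset.mem_insert_self _ _)

lemma procTime_le {s : Sched ι m} {L : ι → ℝ} {k : Fin m} {c : ℝ} (h0 : 0 ≤ c)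
    (h : ∀ b ∈ s.jobs, s.machine b = k → s.ct L b ≤ c) : s.procTime L k ≤ c := by
  rw [procTime_eq]
  apply Finset.max'_le
  intro x hx
  rcases Finset.mem_insert.1 hx with rfl | hx
  · exact h0
  · obtain ⟨b, hb, rfl⟩ := Finset.mem_image.1 hx
    obtain ⟨hb, hk⟩ := Finset.mem_filter.1 hb
    exact h b hb hk

lemma procTime_le_ms (hm : 0 < m) (s : Sched ι m) (L : ι → ℝ) (k : Fin m) :
    s.procTime L k ≤ s.ms L :=
  le_csSup (Set.finite_range _).bddAbove ⟨k, rfl⟩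

lemma ms_le (hm : 0 < m) {s : Sched ι m} {L : ι → ℝ} {c : ℝ}
    (h : ∀ k, s.procTime L k ≤ c) : s.ms L ≤ c := by
  have hne : (Set.range fun k : Fin m => s.procTime L k).Nonempty := ⟨_, ⟨⟨0, hm⟩, rfl⟩⟩
  refine csSup_le hne ?_
  rintro x ⟨k, rfl⟩; exact h k

lemma ms_nonneg (hm : 0 < m) (s : Sched ι m) (L : ι → ℝ) : 0 ≤ s.ms L :=
  (procTime_nonneg s L ⟨0, hm⟩).trans (procTime_le_ms hm s L _)

/-- The schedule obtained by placing a new job `a` on machine `k` at time `t`. -/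
def insSched (s : Sched ι m) (a : ι) (k : Fin m) (t : ℝ) : Sched ι m :=
  ⟨insert a s.jobs, Function.update s.machine a k, Function.update s.start a t⟩

lemma insFeasible {L : ι → ℝ} {C : ι → ι → Prop} {s : Sched ι m}
    (hs : s.Feasible L C) {a : ι} (ha : a ∉ s.jobs) {k : Fin m} {t : ℝ}
    (ht0 : 0 ≤ t)
    (hmach : ∀ b ∈ s.jobs, s.machine b = k → s.ct L b ≤ t)
    (hconf : ∀ b ∈ s.jobs, C a b ∨ C b a → s.ct L b ≤ t ∨ t + L a ≤ s.start b) :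
    (insSched s a k t).Feasible L C := by
  have hne : ∀ b ∈ s.jobs, b ≠ a := fun b hb hba => ha (hba ▸ hb)
  constructor
  · intro x hx
    rcases Finset.mem_insert.1 hx with rfl | hx
    · simpa [insSched] using ht0
    · simpa [insSched, Function.update_of_ne (hne x hx)] using hs.1 x hx
  · intro x hx y hy hxy hcond
    have hx' : x = a ∨ x ∈ s.jobs := Finset.mem_insert.1 hx
    have hy' : y = a ∨ y ∈ s.jobs := Finset.mem_insert.1 hy
    rcases hx' with hx' | hx'
    · subst hx'
      rcases hy' with hy' | hy'
      · exact absurd hy'.symm hxy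
      · have hya : y ≠ x := hne y hy'
        simp only [insSched, Sched.ct, Function.update_self, Function.update_of_ne hya] at hcond ⊢
        have key : s.ct L y ≤ t ∨ t + L x ≤ s.start y := by
          rcases hcond with hcond | hcond
          · exact Or.inl (hmach y hy' hcond.symm)
          · exact hconf y hy' (Or.inl hcond)
        rcases key with h' | h'
        · exact Or.inr (by simpa [Sched.ct] using h')
        · exact Or.inl h'
    · rcases hy' with hy' | hy'
      · subst hy'
        have hxa : x ≠ y := hne x hx'
        simp only [insSched, Sched.ct, Function.update_self, Function.update_of_ne hxa] at hcond ⊢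
        have key : s.ct L x ≤ t ∨ t + L y ≤ s.start x := by
          rcases hcond with hcond | hcond
          · exact Or.inl (hmach x hx' hcond)
          · exact hconf x hx' (Or.inr hcond)
        rcases key with h' | h'
        · exact Or.inl (by simpa [Sched.ct] using h')
        · exact Or.inr h'
      · have hxa : x ≠ a := hne x hx'
        have hya : y ≠ a := hne y hy'
        simp only [insSched, Sched.ct, Function.update_of_ne hxa, Function.update_of_ne hya] at hcond ⊢
        simpa [Sched.ct] using hs.2 x hx' y hy' hxy hcond

lemma insSched_start_self (s : Sched ι m) (a : ι) (k : Fin m) (t : ℝ) :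
    (insSched s a k t).start a = t := Function.update_self _ _ _

open Classical in
lemma exists_insertStep {L : ι → ℝ} {C : ι → ι → Prop} {s : Sched ι m}
    (hs : s.Feasible L C) {a : ι} (ha : a ∉ s.jobs) (k : Fin m) :
    ∃ t : ℝ, InsertStep L C s a k (insSched s a k t) := by
  have hne : ∀ b ∈ s.jobs, b ≠ a := fun b hb hba => ha (hba ▸ hb)
  set Fs : Finset ℝ := insert 0 (s.jobs.image (s.ct L)) with hFs
  have hFsne : Fs.Nonempty := Finset.insert_nonempty _ _
  have h0F : (0:ℝ) ∈ Fs := Finset.mem_insert_self _ _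
  have hctF : ∀ b ∈ s.jobs, s.ct L b ∈ Fs := fun b hb =>
    Finset.mem_insert_of_mem (Finset.mem_image_of_mem _ hb)
  set Good : ℝ → Prop := fun t =>
    (insSched s a k t).Feasible L C ∧ ∀ b ∈ s.jobs, s.machine b = k → s.ct L b ≤ t with hGood
  -- the maximum of Fs is good
  have hmaxG : Good (Fs.max' hFsne) := by
    have hub : ∀ b ∈ s.jobs, s.ct L b ≤ Fs.max' hFsne := fun b hb =>
      Finset.le_max' _ _ (hctF b hb)
    refine ⟨insFeasible hs ha (Finset.le_max' _ _ h0F) (fun b hb _ => hub b hb)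
      (fun b hb _ => Or.inl (hub b hb)), fun b hb _ => hub b hb⟩
  set G := Fs.filter Good with hG
  have hGne : G.Nonempty := ⟨_, Finset.mem_filter.2 ⟨Finset.max'_mem _ _, hmaxG⟩⟩
  set t0 := G.min' hGne with ht0
  have ht0G : Good t0 := (Finset.mem_filter.1 (G.min'_mem hGne)).2
  refine ⟨t0, ha, rfl, rfl, fun b hb => Function.update_of_ne (hne b hb) _ _, ht0G.1,
    fun b hb hbk => by rw [insSched_start_self]; exact ht0G.2 b hb hbk, ?_⟩
  -- minimality
  intro t hfeas hmach
  rw [insSched_start_self]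
  -- identify the updated schedule with insSched s a k t
  have hupd : (Sched.mk (insSched s a k t0).jobs (insSched s a k t0).machine
      (Function.update (insSched s a k t0).start a t)) = insSched s a k t := by
    show Sched.mk _ _ _ = _
    simp only [insSched, Function.update_idem]
  rw [hupd] at hfeas
  have htnn : 0 ≤ t := by
    have := hfeas.1 a (Finset.mem_insert_self _ _)
    simpa [insSched] using this
  -- round t down to the candidate set
  set Fl := Fs.filter (fun c => c ≤ t) with hFl
  have hmemFl : ∀ c : ℝ, c ∈ Fl ↔ c ∈ Fs ∧ c ≤ t := by
    intro c; rw [hFl]; exact Finset.mem_filter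
  have hFlne : Fl.Nonempty := ⟨0, (hmemFl 0).2 ⟨h0F, htnn⟩⟩
  set t' := Fl.max' hFlne with ht'
  have ht'le : t' ≤ t := ((hmemFl t').1 (Fl.max'_mem hFlne)).2
  have ht'F : t' ∈ Fs := ((hmemFl t').1 (Fl.max'_mem hFlne)).1
  have hroundct : ∀ b ∈ s.jobs, s.ct L b ≤ t → s.ct L b ≤ t' := fun b hb hbt =>
    Finset.le_max' _ _ ((hmemFl _).2 ⟨hctF b hb, hbt⟩)
  have h0t' : (0:ℝ) ≤ t' := Finset.le_max' _ _ ((hmemFl 0).2 ⟨h0F, htnn⟩)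
  -- feasibility of inserting at t' via the constraints satisfied by t
  have hfeas' : ∀ b ∈ s.jobs, C a b ∨ C b a → s.ct L b ≤ t' ∨ t' + L a ≤ s.start b := by
    intro b hb hC
    have hba : b ≠ a := hne b hb
    have hdis : t + L a ≤ s.start b ∨ s.ct L b ≤ t := by
      rcases hC with hC | hC
      · have := hfeas.2 a (Finset.mem_insert_self _ _) b (Finset.mem_insert_of_mem hb)
          (Ne.symm hba) (Or.inr hC)
        simpa [insSched, Sched.ct, Function.update_of_ne hba] using this
      · have := hfeas.2 b (Finset.mem_insert_of_mem hb) a (Finset.mem_insert_self _ _)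
          hba (Or.inr hC)
        have h2 := this
        simp only [insSched, Sched.ct, Function.update_self,
          Function.update_of_ne hba] at h2
        tauto
    rcases hdis with h' | h'
    · exact Or.inr (le_trans (by linarith) h')
    · exact Or.inl (hroundct b hb h')
  have hGt' : Good t' := by
    refine ⟨insFeasible hs ha h0t' (fun b hb hbk => hroundct b hb (hmach b hb hbk)) hfeas',
      fun b hb hbk => hroundct b hb (hmach b hb hbk)⟩
  have : t0 ≤ t' := G.min'_le _ (Finset.mem_filter.2 ⟨ht'F, hGt'⟩)
  exact this.trans ht'le

lemma exists_ruleStep (hm : 0 < m) {L : ι → ℝ} {C : ι → ι → Prop} {s : Sched ι m}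
    (hs : s.Feasible L C) {a : ι} (ha : a ∉ s.jobs) :
    ∃ s', RuleStep L C s a s' ∧ s'.Feasible L C ∧ s'.jobs = insert a s.jobs ∧
      (∀ b ∈ s.jobs, s'.start b = s.start b) := by
  obtain ⟨k0, -, hk0⟩ := Finset.exists_min_image Finset.univ (s.procTime L)
    ⟨⟨0, hm⟩, Finset.mem_univ _⟩
  set K := Finset.univ.filter (fun k' => s.procTime L k' = s.procTime L k0) with hK
  have hmemK : ∀ k' : Fin m, k' ∈ K ↔ s.procTime L k' = s.procTime L k0 := by
    intro k'; rw [hK]; simp [Finset.mem_filter]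
  have hKne : K.Nonempty := ⟨k0, (hmemK k0).2 rfl⟩
  set k := K.min' hKne with hk
  have hkval : s.procTime L k = s.procTime L k0 := (hmemK k).1 (K.min'_mem hKne)
  have hkmin : ∀ k', s.procTime L k ≤ s.procTime L k' := by
    intro k'; rw [hkval]; exact hk0 k' (Finset.mem_univ _)
  obtain ⟨t, hins⟩ := exists_insertStep hs ha k
  refine ⟨insSched s a k t, ⟨k, hkmin, ?_, hins⟩, hins.2.2.2.2.1, hins.2.1,
    hins.2.2.2.1⟩
  intro k' hk'
  exact K.min'_le _ ((hmemK k').2 (hk'.trans hkval))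

lemma ruleApply_total (hm : 0 < m) {L : ι → ℝ} {C : ι → ι → Prop} :
    ∀ (l : List ι) (s : Sched ι m), s.Feasible L C → (∀ x ∈ l, x ∉ s.jobs) → l.Nodup →
      ∃ s', RuleApply L C s l s' := by
  intro l
  induction l with
  | nil => exact fun s _ _ _ => ⟨s, rfl⟩
  | cons a l ih =>
    intro s hs hdisj hnd
    obtain ⟨s₁, hstep, hfeas₁, hjobs₁, -⟩ :=
      exists_ruleStep hm hs (hdisj a (List.mem_cons_self))
    have hdisj₁ : ∀ x ∈ l, x ∉ s₁.jobs := by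
      intro x hx
      rw [hjobs₁, Finset.mem_insert]
      rintro (rfl | hmem)
      · exact (List.nodup_cons.1 hnd).1 hx
      · exact hdisj x (List.mem_cons_of_mem _ hx) hmem
    obtain ⟨s', h'⟩ := ih s₁ hfeas₁ hdisj₁ (List.nodup_cons.1 hnd).2
    exact ⟨s', s₁, hstep, h'⟩

lemma exists_small_machine [Fintype ι] (hm : 0 < m) {L : ι → ℝ} {C : ι → ι → Prop} (hL : ∀ x, 0 < L x)
    {o s : Sched ι m} (ho : o.Feasible L C) (hofull : o.jobs = Finset.univ)
    {a : ι} (ha : a ∉ s.jobs)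
    (hst : ∀ b ∈ s.jobs, s.start b ≤ o.start b)
    (hord : ∀ b ∈ s.jobs, o.start b ≤ o.start a) :
    ∃ k, s.procTime L k ≤ o.start a := by
  have hmemo : ∀ x : ι, x ∈ o.jobs := fun x => hofull ▸ Finset.mem_univ x
  have hoa0 : 0 ≤ o.start a := ho.1 a (hmemo a)
  by_contra hcon
  push_neg at hcon
  have hwit : ∀ k : Fin m, ∃ b, b ∈ s.jobs ∧ s.machine b = k ∧ o.start a < s.ct L b := by
    intro k
    have hk := hcon k
    rw [procTime_eq] at hk
    have hmem := Finset.max'_mem (insert (0:ℝ)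
      ((s.jobs.filter (fun b => s.machine b = k)).image (s.ct L))) (Finset.insert_nonempty _ _)
    rcases Finset.mem_insert.1 hmem with h0 | hIm
    · rw [h0] at hk; linarith
    · obtain ⟨b, hb, hbe⟩ := Finset.mem_image.1 hIm
      obtain ⟨hb, hbk⟩ := Finset.mem_filter.1 hb
      exact ⟨b, hb, hbk, by rw [← hbe] at hk; exact hk⟩
  choose w hw1 hw2 hw3 using hwit
  have hkey : ∀ k : Fin m, o.start (w k) ≤ o.start a ∧ o.start a < o.start (w k) + L (w k) := by
    intro k
    refine ⟨hord _ (hw1 k), lt_of_lt_of_le (hw3 k) ?_⟩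
    have := hst _ (hw1 k)
    simp only [Sched.ct]
    linarith
  have hinj : Function.Injective (fun k => o.machine (w k)) := by
    intro k1 k2 he
    by_contra hne
    have hbne : w k1 ≠ w k2 := by
      intro hh
      exact hne (by rw [← hw2 k1, ← hw2 k2, hh])
    have hdis := ho.2 (w k1) (hmemo _) (w k2) (hmemo _) hbne (Or.inl he)
    obtain ⟨h1a, h1b⟩ := hkey k1
    obtain ⟨h2a, h2b⟩ := hkey k2
    simp only [Sched.ct] at hdis
    rcases hdis with h' | h' <;> linarith
  have hsurj := Finite.injective_iff_surjective.mp hinj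
  obtain ⟨k, hk⟩ := hsurj (o.machine a)
  have hwa : w k ≠ a := fun hh => ha (hh ▸ hw1 k)
  have hdis := ho.2 (w k) (hmemo _) a (hmemo a) hwa (Or.inl hk)
  obtain ⟨h1a, h1b⟩ := hkey k
  have hLa := hL a
  simp only [Sched.ct] at hdis
  rcases hdis with h' | h' <;> linarith

lemma ruleApply_bound [Fintype ι] (hm : 0 < m) {L : ι → ℝ} {C : ι → ι → Prop}
    (hL : ∀ x, 0 < L x) (o : Sched ι m) (ho : o.Feasible L C)
    (hofull : o.jobs = Finset.univ) :
    ∀ (l : List ι) (s s' : Sched ι m), RuleApply L C s l s' →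
      s.Feasible L C →
      (∀ x ∈ l, x ∉ s.jobs) → l.Nodup →
      l.Pairwise (fun x y => o.start x ≤ o.start y) →
      (∀ b ∈ s.jobs, s.start b ≤ o.start b) →
      (∀ b ∈ s.jobs, ∀ x ∈ l, o.start b ≤ o.start x) →
      s'.jobs = s.jobs ∪ l.toFinset ∧ ∀ b ∈ s'.jobs, s'.start b ≤ o.start b := by
  intro l
  induction l with
  | nil =>
    intro s s' happ _ _ _ _ hst _
    cases happ
    exact ⟨by simp, hst⟩
  | cons a l ih =>
    intro s s' happ hs hdisj hnd hpair hst hord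
    obtain ⟨s₁, ⟨k, hkmin, -, hins⟩, happ'⟩ := happ
    obtain ⟨hanotin, hjobs₁, hmac₁, hstold₁, hfeas₁, -, hminimal⟩ := hins
    have hmemo : ∀ x : ι, x ∈ o.jobs := fun x => hofull ▸ Finset.mem_univ x
    have haS : a ∉ s.jobs := hdisj a (List.mem_cons_self)
    have hne : ∀ b ∈ s.jobs, b ≠ a := fun b hb hba => haS (hba ▸ hb)
    have hoa0 : 0 ≤ o.start a := ho.1 a (hmemo a)
    have horda : ∀ b ∈ s.jobs, o.start b ≤ o.start a :=
      fun b hb => hord b hb a (List.mem_cons_self)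
    -- a machine with small processing time exists, so machine k is small
    obtain ⟨kg, hkg⟩ := exists_small_machine hm hL ho hofull haS hst horda
    have hksmall : s.procTime L k ≤ o.start a := (hkmin kg).trans hkg
    -- inserting a at time `o.start a` on machine k is feasible
    have hmachle : ∀ b ∈ s.jobs, s.machine b = k → s.ct L b ≤ o.start a :=
      fun b hb hbk => (le_procTime hb hbk).trans hksmall
    have hconf : ∀ b ∈ s.jobs, C a b ∨ C b a →
        s.ct L b ≤ o.start a ∨ o.start a + L a ≤ s.start b := by
      intro b hb hC
      have hba : b ≠ a := hne b hb
      have hdis : o.ct L a ≤ o.start b ∨ o.ct L b ≤ o.start a := by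
        rcases hC with hC | hC
        · exact ho.2 a (hmemo a) b (hmemo b) (Ne.symm hba) (Or.inr hC)
        · exact (ho.2 b (hmemo b) a (hmemo a) hba (Or.inr hC)).symm
      rcases hdis with h' | h'
      · exfalso
        have h1 := horda b hb
        have h2 := hL a
        simp only [Sched.ct] at h'
        linarith
      · left
        have h1 := hst b hb
        simp only [Sched.ct] at h' ⊢
        linarith
    have hcand : (insSched s a k (o.start a)).Feasible L C :=
      insFeasible hs haS hoa0 hmachle hconf
    -- hence the rule starts a no later than o does
    have hsta : s₁.start a ≤ o.start a := by
      apply hminimal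
      · refine Feasible.congr' hcand ?_ ?_ ?_
        · show s₁.jobs = insert a s.jobs; exact hjobs₁
        · intro b _
          show s₁.machine b = Function.update s.machine a k b
          rw [hmac₁]
        · intro b hb
          rcases Finset.mem_insert.1 hb with rfl | hb
          · show Function.update s₁.start b (o.start b) b = Function.update s.start b (o.start b) b
            rw [Function.update_self, Function.update_self]
          · show Function.update s₁.start a (o.start a) b = Function.update s.start a (o.start a) b
            rw [Function.update_of_ne (hne b hb), Function.update_of_ne (hne b hb), hstold₁ b hb]
      · exact hmachle
    -- invariants for the tail
    have hfeas₁' : s₁.Feasible L C := hfeas₁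
    have hdisj₁ : ∀ x ∈ l, x ∉ s₁.jobs := by
      intro x hx
      rw [hjobs₁, Finset.mem_insert]
      rintro (rfl | hmem)
      · exact (List.nodup_cons.1 hnd).1 hx
      · exact hdisj x (List.mem_cons_of_mem _ hx) hmem
    have hst₁ : ∀ b ∈ s₁.jobs, s₁.start b ≤ o.start b := by
      intro b hb
      rw [hjobs₁] at hb
      rcases Finset.mem_insert.1 hb with rfl | hb
      · exact hsta
      · rw [hstold₁ b hb]; exact hst b hb
    have hord₁ : ∀ b ∈ s₁.jobs, ∀ x ∈ l, o.start b ≤ o.start x := by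
      intro b hb x hx
      rw [hjobs₁] at hb
      rcases Finset.mem_insert.1 hb with rfl | hb
      · exact (List.pairwise_cons.1 hpair).1 x hx
      · exact hord b hb x (List.mem_cons_of_mem _ hx)
    obtain ⟨hj', hs'⟩ := ih s₁ s' happ' hfeas₁' hdisj₁ (List.nodup_cons.1 hnd).2
      (List.pairwise_cons.1 hpair).2 hst₁ hord₁
    refine ⟨?_, hs'⟩
    rw [hj', hjobs₁]
    ext x
    simp [List.toFinset_cons]

end Sched

/-- The set of all representable schedules contains an optimal schedule:
there is a permutation (a duplicate-free enumeration) of the full job set such that the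
schedule created from it by the derivation rule has makespan ≤ the makespan of every
subschedule formed by the full job set. -/
theorem stmt11 {ι : Type*} [Fintype ι] [DecidableEq ι] {m : ℕ} (hm : 0 < m)
    (L : ι → ℝ) (C : ι → ι → Prop)
    (hL : ∀ a, 0 < L a) (hCsymm : ∀ a b, C a b → C b a) (hCirr : ∀ a, ¬ C a a) :
    ∃ (l : List ι) (e s : Sched ι m), l.Nodup ∧ (∀ a : ι, a ∈ l) ∧ e.jobs = ∅ ∧
      Sched.RuleApply L C e l s ∧
      ∀ t : Sched ι m, t.jobs = Finset.univ → t.IsSub L C → s.ms L ≤ t.ms L := by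
  classical
  set e : Sched ι m := ⟨∅, fun _ => ⟨0, hm⟩, fun _ => 0⟩ with he
  have hej : e.jobs = ∅ := rfl
  have hefeas : e.Feasible L C := by
    constructor
    · intro a ha; simp [hej] at ha
    · intro a ha; simp [hej] at ha
  have hFex : ∀ l : List ι, ∃ s', l.Nodup → Sched.RuleApply L C e l s' := by
    intro l
    by_cases h : l.Nodup
    · obtain ⟨s', hs'⟩ := Sched.ruleApply_total hm l e hefeas
        (fun x _ => by rw [hej]; exact Finset.notMem_empty x) h
      exact ⟨s', fun _ => hs'⟩
    · exact ⟨e, fun h' => absurd h' h⟩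
  choose F hF using hFex
  set P := (Finset.univ : Finset ι).toList.permutations with hP
  have hmemP : ∀ l : List ι, l ∈ P.toFinset ↔ List.Perm l (Finset.univ : Finset ι).toList := by
    intro l; rw [hP]; simp [List.mem_permutations]
  have hPne : P.toFinset.Nonempty := ⟨_, (hmemP _).2 (List.Perm.refl _)⟩
  obtain ⟨l0, hl0P, hl0min⟩ := Finset.exists_min_image P.toFinset (fun l => (F l).ms L) hPne
  have hl0perm := (hmemP l0).1 hl0P
  have hl0nd : l0.Nodup := (hl0perm.nodup_iff).2 (Finset.nodup_toList _)
  refine ⟨l0, e, F l0, hl0nd, ?_, hej, hF l0 hl0nd, ?_⟩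
  · intro a; rw [hl0perm.mem_iff, Finset.mem_toList]; exact Finset.mem_univ a
  · intro t htfull htsub
    have htfeas : t.Feasible L C := htsub.1
    set r : ι → ι → Prop := fun x y => t.start x ≤ t.start y with hr
    haveI : DecidableRel r := Classical.decRel r
    haveI : IsTotal ι r := ⟨fun a b => le_total _ _⟩
    haveI : IsTrans ι r := ⟨fun a b c => le_trans⟩
    set lt := List.insertionSort r (Finset.univ : Finset ι).toList with hlt
    have hltperm : List.Perm lt (Finset.univ : Finset ι).toList := List.perm_insertionSort r _
    have hltnd : lt.Nodup := hltperm.nodup_iff.2 (Finset.nodup_toList _)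
    have hltsorted : lt.Pairwise r := List.pairwise_insertionSort r _
    have hbnd := Sched.ruleApply_bound hm hL t htfeas htfull lt e (F lt) (hF lt hltnd)
      hefeas (fun x _ => by rw [hej]; exact Finset.notMem_empty x) hltnd hltsorted
      (fun b hb => absurd (hej ▸ hb) (Finset.notMem_empty b))
      (fun b hb => absurd (hej ▸ hb) (Finset.notMem_empty b))
    obtain ⟨hjobs, hstle⟩ := hbnd
    have hmst : (F lt).ms L ≤ t.ms L := by
      apply Sched.ms_le hm
      intro k
      apply Sched.procTime_le (Sched.ms_nonneg hm t L)
      intro b hb hbk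
      have h1 : (F lt).ct L b ≤ t.ct L b := by
        simp only [Sched.ct]
        have := hstle b hb
        linarith
      have h2 : t.ct L b ≤ t.procTime L (t.machine b) :=
        Sched.le_procTime (htfull ▸ Finset.mem_univ b) rfl
      exact h1.trans (h2.trans (Sched.procTime_le_ms hm t L _))
    have hltmem : lt ∈ P.toFinset := (hmemP lt).2 hltperm
    exact (hl0min lt hltmem).trans hmst
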